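/- Let X be standard normal and for ε > 0 define Y = −ε·1_{X ∈ (0,ε)} + ε·1_{X ∈ (−ε−δ, −ε)}, where δ > 0 is chosen so that P(X ∈ (0,ε)) = P(X ∈ (−ε−δ, −ε)). Then E[Y] = 0, Var[Y] = 2ε²·P(X ∈ (0,ε)) ≤ √(2/π)·ε³, and d_K(X+Y, N) ≥ P(X ∈ (0,ε)) ≥ ε·e^{−ε²/2}/√(2π) ≥ (e^{−ε²/2}/(4π)^{1/3})·(Var[Y])^{1/3}. Hence the exponent 1/3 in the bound d_K(X+Y,N) ≤ d_K(X,N) + (4/3)(Var[Y])^{1/3} is optimal. -/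

import Mathlib

open MeasureTheory ProbabilityTheory

/-- Kolmogorov distance between (the laws of) two real random variables. -/
noncomputable def dK {Ω : Type*} [MeasurableSpace Ω] (μ : Measure Ω) (X Y : Ω → ℝ) : ℝ :=
  ⨆ t : ℝ, |(μ {ω | X ω ≤ t}).toReal - (μ {ω | Y ω ≤ t}).toReal|

theorem kolmogorov_cube_root_rate_optimal
    {Ω : Type*} [MeasurableSpace Ω] (μ : Measure Ω) [IsProbabilityMeasure μ]
    (X N : Ω → ℝ)
    (hX : Measure.map X μ = gaussianReal 0 1)
    (hN : Measure.map N μ = gaussianReal 0 1)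
    (ε δ : ℝ) (hε : 0 < ε) (hδ : 0 < δ)
    (hbal : μ {ω | X ω ∈ Set.Ioo 0 ε} = μ {ω | X ω ∈ Set.Ioo (-ε - δ) (-ε)})
    (Y : Ω → ℝ)
    (hY : Y = fun ω =>
      (-ε) * {ω | X ω ∈ Set.Ioo 0 ε}.indicator (fun _ => (1 : ℝ)) ω
        + ε * {ω | X ω ∈ Set.Ioo (-ε - δ) (-ε)}.indicator (fun _ => (1 : ℝ)) ω) :
    (∫ ω, Y ω ∂μ = 0)
    ∧ variance Y μ = 2 * ε ^ 2 * (μ {ω | X ω ∈ Set.Ioo 0 ε}).toReal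
    ∧ variance Y μ ≤ Real.sqrt (2 / Real.pi) * ε ^ 3
    ∧ dK μ (fun ω => X ω + Y ω) N ≥ (μ {ω | X ω ∈ Set.Ioo 0 ε}).toReal
    ∧ (μ {ω | X ω ∈ Set.Ioo 0 ε}).toReal
        ≥ ε * Real.exp (-ε ^ 2 / 2) / Real.sqrt (2 * Real.pi)
    ∧ ε * Real.exp (-ε ^ 2 / 2) / Real.sqrt (2 * Real.pi)
        ≥ (Real.exp (-ε ^ 2 / 2) / (4 * Real.pi) ^ ((1 : ℝ) / 3))
          * (variance Y μ) ^ ((1 : ℝ) / 3) := by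
  have hπ : (0:ℝ) < Real.pi := Real.pi_pos
  have hs2π : (0:ℝ) < Real.sqrt (2 * Real.pi) := Real.sqrt_pos.mpr (by positivity)
  -- X is a.e. measurable
  have hXae : AEMeasurable X μ := by
    refine aemeasurable_of_map_neZero ?_
    rw [hX]; infer_instance
  have hNae : AEMeasurable N μ := by
    refine aemeasurable_of_map_neZero ?_
    rw [hN]; infer_instance
  set X' := hXae.mk X with hX'def
  have hX'm : Measurable X' := hXae.measurable_mk
  have hXX' : X =ᵐ[μ] X' := hXae.ae_eq_mk
  -- the two sets
  set A : Set Ω := {ω | X ω ∈ Set.Ioo 0 ε} with hAdef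
  set B : Set Ω := {ω | X ω ∈ Set.Ioo (-ε - δ) (-ε)} with hBdef
  set A' : Set Ω := X' ⁻¹' Set.Ioo 0 ε with hA'def
  set B' : Set Ω := X' ⁻¹' Set.Ioo (-ε - δ) (-ε) with hB'def
  have hA'm : MeasurableSet A' := hX'm measurableSet_Ioo
  have hB'm : MeasurableSet B' := hX'm measurableSet_Ioo
  have hAA' : A =ᵐ[μ] A' := by
    filter_upwards [hXX'] with ω hω
    show (X ω ∈ Set.Ioo 0 ε) = (X' ω ∈ Set.Ioo 0 ε)
    rw [hω]
  have hBB' : B =ᵐ[μ] B' := by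
    filter_upwards [hXX'] with ω hω
    show (X ω ∈ Set.Ioo (-ε - δ) (-ε)) = (X' ω ∈ Set.Ioo (-ε - δ) (-ε))
    rw [hω]
  have hμA : μ A = μ A' := measure_congr hAA'
  have hμB : μ B = μ B' := measure_congr hBB'
  have hA'B' : Disjoint A' B' := by
    refine Set.disjoint_left.mpr fun ω hA hB => ?_
    have h1 : (0:ℝ) < X' ω := hA.1
    have h2 : X' ω < -ε := hB.2
    linarith
  -- value of μ A as a gaussian integral
  have hmapA : μ A = ENNReal.ofReal (∫ x in Set.Ioo 0 ε, gaussianPDFReal 0 1 x) := by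
    have := Measure.map_apply_of_aemeasurable hXae (measurableSet_Ioo : MeasurableSet (Set.Ioo (0:ℝ) ε))
    rw [hX] at this
    rw [hAdef, show {ω | X ω ∈ Set.Ioo 0 ε} = X ⁻¹' Set.Ioo 0 ε from rfl, ← this,
      gaussianReal_apply_eq_integral _ one_ne_zero]
  set p : ℝ := (μ A).toReal with hpdef
  have hμAfin : μ A ≠ ⊤ := measure_ne_top μ A
  have hpval : p = ∫ x in Set.Ioo 0 ε, gaussianPDFReal 0 1 x := by
    rw [hpdef, hmapA, ENNReal.toReal_ofReal]
    exact setIntegral_nonneg measurableSet_Ioo fun x _ => gaussianPDFReal_nonneg _ _ _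
  -- bounds on p
  have hpdf : ∀ x : ℝ, gaussianPDFReal 0 1 x = Real.exp (-x^2/2) / Real.sqrt (2 * Real.pi) := by
    intro x
    simp only [gaussianPDFReal, NNReal.coe_one, mul_one, sub_zero]
    ring
  have hvol : (volume (Set.Ioo (0:ℝ) ε)).toReal = ε := by
    simp [Real.volume_Ioo, ENNReal.toReal_ofReal hε.le]
  have hpLB : p ≥ ε * Real.exp (-ε ^ 2 / 2) / Real.sqrt (2 * Real.pi) := by
    rw [hpval]
    have := setIntegral_ge_of_const_le (μ := volume) (s := Set.Ioo (0:ℝ) ε)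
      (f := gaussianPDFReal 0 1) (c := Real.exp (-ε ^ 2 / 2) / Real.sqrt (2 * Real.pi))
      measurableSet_Ioo (by simp [Real.volume_Ioo]) ?_ ((integrable_gaussianPDFReal 0 1).restrict)
    · calc ε * Real.exp (-ε ^ 2 / 2) / Real.sqrt (2 * Real.pi)
          = Real.exp (-ε ^ 2 / 2) / Real.sqrt (2 * Real.pi) * (volume (Set.Ioo (0:ℝ) ε)).toReal := by
            rw [hvol]; ring
        _ ≤ _ := by rw [smul_eq_mul, mul_comm] at this; exact this
    · intro x hx
      obtain ⟨hx1, hx2⟩ := hx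
      rw [hpdf]
      refine (div_le_div_iff_of_pos_right hs2π).mpr (Real.exp_le_exp.mpr ?_)
      nlinarith
  have hpUB : p ≤ ε / Real.sqrt (2 * Real.pi) := by
    have hconst : ∫ _x in Set.Ioo (0:ℝ) ε, (1 / Real.sqrt (2 * Real.pi)) =
        ε / Real.sqrt (2 * Real.pi) := by
      rw [setIntegral_const, measureReal_def, hvol, smul_eq_mul]; ring
    rw [hpval, ← hconst]
    refine setIntegral_mono_on ((integrable_gaussianPDFReal 0 1).restrict)
      (integrableOn_const (by simp [Real.volume_Ioo])) measurableSet_Ioo ?_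
    intro x hx
    rw [hpdf]
    refine (div_le_div_iff_of_pos_right hs2π).mpr ?_
    calc Real.exp (-x^2/2) ≤ Real.exp 0 := by
          apply Real.exp_le_exp.mpr; nlinarith [sq_nonneg x]
      _ = 1 := Real.exp_zero
  have hp0 : 0 ≤ p := ENNReal.toReal_nonneg
  classical
  -- the modified Y
  set Y' : Ω → ℝ := fun ω =>
      (-ε) * A'.indicator (fun _ => (1 : ℝ)) ω + ε * B'.indicator (fun _ => (1 : ℝ)) ω with hY'def
  have hYY' : Y =ᵐ[μ] Y' := by
    filter_upwards [indicator_ae_eq_of_ae_eq_set (f := fun _ => (1:ℝ)) hAA',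
      indicator_ae_eq_of_ae_eq_set (f := fun _ => (1:ℝ)) hBB'] with ω e1 e2
    simp only [hY, hY'def]
    rw [e1, e2]
  have hIndA : Integrable (A'.indicator (fun _ => (1:ℝ))) μ := (integrable_const 1).indicator hA'm
  have hIndB : Integrable (B'.indicator (fun _ => (1:ℝ))) μ := (integrable_const 1).indicator hB'm
  have hμA'fin : μ A' ≠ ⊤ := measure_ne_top μ A'
  have hμB'fin : μ B' ≠ ⊤ := measure_ne_top μ B'
  have hpA' : (μ A').toReal = p := by rw [hpdef, hμA]
  have hpB' : (μ B').toReal = p := by rw [hpdef, ← hμB, ← hbal]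
  -- mean zero
  have hmean : ∫ ω, Y ω ∂μ = 0 := by
    rw [integral_congr_ae hYY']
    rw [show Y' = fun ω => (-ε) * A'.indicator (fun _ => (1 : ℝ)) ω
        + ε * B'.indicator (fun _ => (1 : ℝ)) ω from rfl]
    rw [integral_add ((hIndA.const_mul _)) ((hIndB.const_mul _)),
      integral_const_mul, integral_const_mul,
      integral_indicator_const (1:ℝ) hA'm, integral_indicator_const (1:ℝ) hB'm]
    simp only [smul_eq_mul, mul_one]
    rw [measureReal_def, measureReal_def, hpA', hpB']
    ring
  -- indicator values are in [0,1]
  have h01 : ∀ (s : Set Ω) (ω : Ω), (0:ℝ) ≤ s.indicator (fun _ => (1:ℝ)) ω ∧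
      s.indicator (fun _ => (1:ℝ)) ω ≤ 1 := by
    intro s ω
    by_cases h : ω ∈ s <;> simp [h]
  -- Y is in L²
  have hY'sm : AEStronglyMeasurable Y' μ := by
    refine AEStronglyMeasurable.add ?_ ?_ <;> refine AEStronglyMeasurable.const_mul ?_ _
    · exact (measurable_const.indicator hA'm).aestronglyMeasurable
    · exact (measurable_const.indicator hB'm).aestronglyMeasurable
  have hYm2 : MemLp Y 2 μ := by
    refine MemLp.of_bound (hY'sm.congr hYY'.symm) (|ε| + |ε|) ?_
    filter_upwards [hYY'] with ω hω
    rw [hω]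
    have e1 : |A'.indicator (fun _ => (1:ℝ)) ω| ≤ 1 := by
      rw [abs_of_nonneg (h01 A' ω).1]; exact (h01 A' ω).2
    have e2 : |B'.indicator (fun _ => (1:ℝ)) ω| ≤ 1 := by
      rw [abs_of_nonneg (h01 B' ω).1]; exact (h01 B' ω).2
    calc ‖Y' ω‖ ≤ ‖(-ε) * A'.indicator (fun _ => (1:ℝ)) ω‖
          + ‖ε * B'.indicator (fun _ => (1:ℝ)) ω‖ := norm_add_le _ _
      _ ≤ |ε| + |ε| := by
          rw [norm_mul, norm_mul, Real.norm_eq_abs, Real.norm_eq_abs, Real.norm_eq_abs,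
            Real.norm_eq_abs, abs_neg]
          have hε0 := abs_nonneg ε
          nlinarith [abs_nonneg (A'.indicator (fun _ => (1:ℝ)) ω),
            abs_nonneg (B'.indicator (fun _ => (1:ℝ)) ω)]
  -- pointwise square identity
  have hsqeq : ∀ ω, (Y' ω)^2 = ε^2 * A'.indicator (fun _ => (1:ℝ)) ω
      + ε^2 * B'.indicator (fun _ => (1:ℝ)) ω := by
    intro ω
    by_cases hA : ω ∈ A'
    · have hB : ω ∉ B' := Set.disjoint_left.mp hA'B' hA
      simp only [hY'def, Set.indicator_of_mem hA, Set.indicator_of_notMem hB]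
      ring
    · by_cases hB : ω ∈ B' <;>
        simp only [hY'def, Set.indicator_of_mem, Set.indicator_of_notMem, hA, hB,
          not_false_iff] <;> ring
  -- variance
  have hvarY : variance Y μ = 2 * ε ^ 2 * p := by
    rw [variance_eq_sub hYm2, hmean]
    have hYsq : (Y ^ 2 : Ω → ℝ) =ᵐ[μ] fun ω => ε^2 * A'.indicator (fun _ => (1:ℝ)) ω
        + ε^2 * B'.indicator (fun _ => (1:ℝ)) ω := by
      filter_upwards [hYY'] with ω hω
      show (Y ω)^2 = _
      rw [hω, hsqeq ω]
    rw [integral_congr_ae hYsq,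
      integral_add ((hIndA.const_mul _)) ((hIndB.const_mul _)),
      integral_const_mul, integral_const_mul,
      integral_indicator_const (1:ℝ) hA'm, integral_indicator_const (1:ℝ) hB'm]
    simp only [smul_eq_mul, mul_one]
    rw [measureReal_def, measureReal_def, hpA', hpB']
    ring
  -- key sqrt identity
  have hkey : Real.sqrt (2 / Real.pi) * Real.sqrt (2 * Real.pi) = 2 := by
    rw [← Real.sqrt_mul (by positivity)]
    rw [show (2 / Real.pi) * (2 * Real.pi) = 2^2 by field_simp]
    exact Real.sqrt_sq (by norm_num)
  have hvar3 : variance Y μ ≤ Real.sqrt (2 / Real.pi) * ε ^ 3 := by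
    rw [hvarY]
    calc 2 * ε ^ 2 * p ≤ 2 * ε ^ 2 * (ε / Real.sqrt (2 * Real.pi)) := by
          exact mul_le_mul_of_nonneg_left hpUB (by positivity)
      _ = (2 / Real.sqrt (2 * Real.pi)) * ε ^ 3 := by ring
      _ = Real.sqrt (2 / Real.pi) * ε ^ 3 := by
          rw [show (2:ℝ) / Real.sqrt (2 * Real.pi) = Real.sqrt (2 / Real.pi) by
            rw [div_eq_iff hs2π.ne']; exact hkey.symm]
  -- Kolmogorov distance lower bound
  have hdK : dK μ (fun ω => X ω + Y ω) N ≥ p := by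
    set S : Set Ω := {ω | X ω ≤ 0} with hSdef
    have hμS : μ S = μ {ω | N ω ≤ 0} := by
      have h1 := Measure.map_apply_of_aemeasurable hXae (measurableSet_Iic (a := (0:ℝ)))
      have h2 := Measure.map_apply_of_aemeasurable hNae (measurableSet_Iic (a := (0:ℝ)))
      rw [hX] at h1; rw [hN] at h2
      have : μ S = gaussianReal 0 1 (Set.Iic 0) := h1.symm
      rw [this, h2]
      rfl
    have hsub : S ∪ A ⊆ {ω | X ω + Y ω ≤ 0} := by
      rintro ω (hS | hA)
      · have hnA : ω ∉ A := by
          intro h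
          exact absurd hS (not_le.mpr h.1)
        by_cases hB : ω ∈ B
        · have hXB : X ω < -ε := hB.2
          simp only [Set.mem_setOf_eq, hY, Set.indicator_of_notMem hnA,
            Set.indicator_of_mem hB]
          linarith
        · simp only [Set.mem_setOf_eq, hY, Set.indicator_of_notMem hnA,
            Set.indicator_of_notMem hB]
          simp only [mul_zero, add_zero]; exact hS
      · have hnB : ω ∉ B := by
          intro h
          have := hA.1
          have := h.2
          linarith
        simp only [Set.mem_setOf_eq, hY, Set.indicator_of_mem hA,
          Set.indicator_of_notMem hnB]
        have := hA.2
        linarith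
    have hAnm : NullMeasurableSet A μ := hA'm.nullMeasurableSet.congr hAA'.symm
    have hdisj : Disjoint S A := by
      refine Set.disjoint_left.mpr fun ω h1 h2 => ?_
      exact absurd (h1 : X ω ≤ 0) (not_le.mpr h2.1)
    have hunion : μ (S ∪ A) = μ S + μ A := measure_union₀ hAnm hdisj.aedisjoint
    have hμXY : μ S + μ A ≤ μ {ω | X ω + Y ω ≤ 0} := hunion ▸ measure_mono hsub
    have hato : (μ S).toReal + p ≤ (μ {ω | X ω + Y ω ≤ 0}).toReal := by
      have := ENNReal.toReal_mono (measure_ne_top μ _) hμXY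
      rwa [ENNReal.toReal_add (measure_ne_top μ S) hμAfin] at this
    have hbdd : BddAbove (Set.range fun t : ℝ =>
        |(μ {ω | X ω + Y ω ≤ t}).toReal - (μ {ω | N ω ≤ t}).toReal|) := by
      refine ⟨1, ?_⟩
      rintro x ⟨t, rfl⟩
      have h1 : (μ {ω | X ω + Y ω ≤ t}).toReal ≤ 1 := by
        have := prob_le_one (μ := μ) (s := {ω | X ω + Y ω ≤ t})
        simpa using ENNReal.toReal_mono ENNReal.one_ne_top this
      have h2 : (μ {ω | N ω ≤ t}).toReal ≤ 1 := by
        have := prob_le_one (μ := μ) (s := {ω | N ω ≤ t})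
        simpa using ENNReal.toReal_mono ENNReal.one_ne_top this
      have h3 : (0:ℝ) ≤ (μ {ω | X ω + Y ω ≤ t}).toReal := ENNReal.toReal_nonneg
      have h4 : (0:ℝ) ≤ (μ {ω | N ω ≤ t}).toReal := ENNReal.toReal_nonneg
      rw [abs_le]
      constructor <;> linarith
    have hle := le_ciSup hbdd (0:ℝ)
    refine le_trans ?_ hle
    have hb : (μ {ω | N ω ≤ (0:ℝ)}).toReal = (μ S).toReal := by rw [← hμS]
    calc p ≤ (μ {ω | X ω + Y ω ≤ (0:ℝ)}).toReal - (μ {ω | N ω ≤ (0:ℝ)}).toReal := by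
          rw [hb]; linarith
      _ ≤ |(μ {ω | X ω + Y ω ≤ (0:ℝ)}).toReal - (μ {ω | N ω ≤ (0:ℝ)}).toReal| := le_abs_self _
  -- final comparison
  have hfin : ε * Real.exp (-ε ^ 2 / 2) / Real.sqrt (2 * Real.pi)
      ≥ (Real.exp (-ε ^ 2 / 2) / (4 * Real.pi) ^ ((1 : ℝ) / 3))
        * (variance Y μ) ^ ((1 : ℝ) / 3) := by
    set c : ℝ := ε / Real.sqrt (2 * Real.pi) with hcdef
    have hc0 : 0 < c := div_pos hε hs2π
    have h4π : (0:ℝ) < 4 * Real.pi := by positivity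
    have hvarc : variance Y μ ≤ (4 * Real.pi) * c ^ 3 := by
      refine hvar3.trans (le_of_eq ?_)
      have hs3 : Real.sqrt (2 * Real.pi) ^ 3 ≠ 0 := by positivity
      have hsq : Real.sqrt (2 * Real.pi) ^ 2 = 2 * Real.pi :=
        Real.sq_sqrt (by positivity)
      rw [hcdef, div_pow, ← mul_div_assoc, eq_div_iff hs3]
      calc Real.sqrt (2 / Real.pi) * ε ^ 3 * Real.sqrt (2 * Real.pi) ^ 3
          = (Real.sqrt (2 / Real.pi) * Real.sqrt (2 * Real.pi)) * ε ^ 3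
            * Real.sqrt (2 * Real.pi) ^ 2 := by ring
        _ = 2 * ε ^ 3 * (2 * Real.pi) := by rw [hkey, hsq]
        _ = 4 * Real.pi * ε ^ 3 := by ring
    have hrpow : (variance Y μ) ^ ((1:ℝ)/3) ≤ (4 * Real.pi) ^ ((1:ℝ)/3) * c := by
      have h1 : (variance Y μ) ^ ((1:ℝ)/3) ≤ ((4 * Real.pi) * c ^ 3) ^ ((1:ℝ)/3) :=
        Real.rpow_le_rpow (variance_nonneg Y μ) hvarc (by norm_num)
      refine h1.trans (le_of_eq ?_)
      rw [Real.mul_rpow h4π.le (by positivity)]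
      congr 1
      rw [← Real.rpow_natCast c 3, ← Real.rpow_mul hc0.le]
      norm_num
    have h4πr : (0:ℝ) < (4 * Real.pi) ^ ((1:ℝ)/3) := Real.rpow_pos_of_pos h4π _
    have hexp : (0:ℝ) < Real.exp (-ε ^ 2 / 2) := Real.exp_pos _
    calc (Real.exp (-ε ^ 2 / 2) / (4 * Real.pi) ^ ((1 : ℝ) / 3)) * (variance Y μ) ^ ((1 : ℝ) / 3)
        ≤ (Real.exp (-ε ^ 2 / 2) / (4 * Real.pi) ^ ((1 : ℝ) / 3))
          * ((4 * Real.pi) ^ ((1:ℝ)/3) * c) := by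
          exact mul_le_mul_of_nonneg_left hrpow (by positivity)
      _ = Real.exp (-ε ^ 2 / 2) * c := by
          rw [div_mul_eq_mul_div, mul_comm ((4 * Real.pi) ^ ((1:ℝ)/3)) c, ← mul_assoc,
            mul_div_assoc, div_self h4πr.ne', mul_one]
      _ = ε * Real.exp (-ε ^ 2 / 2) / Real.sqrt (2 * Real.pi) := by
          rw [hcdef]; ring
  exact ⟨hmean, hvarY, hvar3, hdK, hpLB, hfin⟩
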